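/- Let a < b be real numbers, let q ≥ 1 be a natural number, and let v : ℝ → ℝ be continuously differentiable on [a, b]. Then v(a)² ≤ ((q + 1)/(b − a)) ∫_a^b v(s)² ds + ((b − a)/q) ∫_a^b v'(s)² ds, and the same bound holds with v(a)² replaced by v(b)². -/

import Mathlib

open MeasureTheory intervalIntegral

lemma aux10 (a b : ℝ) (hab : a < b) (q : ℕ) (hq : 1 ≤ q) (v v' : ℝ → ℝ)
    (hderiv : ∀ s ∈ Set.Icc a b, HasDerivAt v (v' s) s)
    (hcont : ContinuousOn v' (Set.Icc a b)) (c : ℝ) (hc : c ∈ Set.Icc a b) :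
    (v c) ^ 2 ≤ (((q : ℝ) + 1) / (b - a)) * (∫ s in a..b, (v s) ^ 2) +
        ((b - a) / (q : ℝ)) * (∫ s in a..b, (v' s) ^ 2) := by
  have hba : (0:ℝ) < b - a := by linarith
  have hq' : (0:ℝ) < q := by exact_mod_cast hq
  have hv : ContinuousOn v (Set.Icc a b) := fun s hs =>
    (hderiv s hs).continuousAt.continuousWithinAt
  set g' : ℝ → ℝ := fun x => 2 * v x * v' x with hg'
  have hg'cont : ContinuousOn g' (Set.Icc a b) :=
    (continuousOn_const.mul hv).mul hcont
  have hg'int : ∀ x ∈ Set.Icc a b, ∀ y ∈ Set.Icc a b,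
      IntervalIntegrable g' volume x y := by
    intro x hx y hy
    exact (hg'cont.mono (Set.uIcc_subset_Icc hx hy)).intervalIntegrable
  have habsint : IntervalIntegrable (fun x => |g' x|) volume a b :=
    ((hg'cont.mono (by rw [Set.uIcc_of_le hab.le])).intervalIntegrable).abs
  have hFTC : ∀ x ∈ Set.Icc a b, ∀ y ∈ Set.Icc a b, x ≤ y →
      (∫ t in x..y, g' t) = v y ^ 2 - v x ^ 2 := by
    intro x hx y hy hxy
    apply intervalIntegral.integral_eq_sub_of_hasDerivAt
    · intro t ht
      rw [Set.uIcc_of_le hxy] at ht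
      have ht' : t ∈ Set.Icc a b := ⟨le_trans hx.1 ht.1, le_trans ht.2 hy.2⟩
      have h2 := (hderiv t ht').pow 2
      convert h2 using 1
      · rfl
      · rfl
      simp only [hg']
      push_cast
      ring
    · exact hg'int x hx y hy
  set I2 : ℝ := ∫ x in a..b, |g' x| with hI2
  -- key pointwise bound in s
  have key : ∀ s ∈ Set.Icc a b, v c ^ 2 - I2 ≤ v s ^ 2 := by
    intro s hs
    have habs : ∀ x ∈ Set.Icc a b, ∀ y ∈ Set.Icc a b, x ≤ y →
        |∫ t in x..y, g' t| ≤ I2 := by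
      intro x hx y hy hxy
      calc |∫ t in x..y, g' t| ≤ ∫ t in x..y, |g' t| :=
            intervalIntegral.abs_integral_le_integral_abs hxy
        _ ≤ I2 := by
            apply intervalIntegral.integral_mono_interval hx.1 hxy hy.2
            · filter_upwards with t using abs_nonneg _
            · exact habsint
    rcases le_total c s with h | h
    · have e := hFTC c hc s hs h
      have h3 := habs c hc s hs h
      rw [e] at h3
      have h4 := abs_le.mp h3
      linarith [h4.1, h4.2]
    · have e := hFTC s hs c hc h
      have h3 := habs s hs c hc h
      rw [e] at h3
      have h4 := abs_le.mp h3
      linarith [h4.1, h4.2]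
  -- integrate key over s
  have hv2int : IntervalIntegrable (fun s => v s ^ 2) volume a b :=
    ((hv.mono (by rw [Set.uIcc_of_le hab.le])).pow 2).intervalIntegrable
  have hv'2int : IntervalIntegrable (fun s => v' s ^ 2) volume a b :=
    ((hcont.mono (by rw [Set.uIcc_of_le hab.le])).pow 2).intervalIntegrable
  have step1 : (b - a) * (v c ^ 2 - I2) ≤ ∫ s in a..b, v s ^ 2 := by
    have h := intervalIntegral.integral_mono_on hab.le
      intervalIntegrable_const hv2int key
    rwa [intervalIntegral.integral_const, smul_eq_mul] at h
  -- bound I2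
  have step2 : I2 ≤ ((q : ℝ) / (b - a)) * (∫ s in a..b, v s ^ 2) +
      ((b - a) / (q : ℝ)) * (∫ s in a..b, v' s ^ 2) := by
    have hpt : ∀ x ∈ Set.Icc a b,
        |g' x| ≤ ((q : ℝ) / (b - a)) * v x ^ 2 + ((b - a) / (q : ℝ)) * v' x ^ 2 := by
      intro x hx
      set t : ℝ := (q : ℝ) / (b - a) with ht
      have ht0 : 0 < t := div_pos hq' hba
      have htinv : (b - a) / (q : ℝ) = 1 / t := by
        rw [ht]; field_simp [hq'.ne', hba.ne']
      rw [htinv]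
      have h1 : t * (1 / t) = 1 := by field_simp
      rcases abs_cases (g' x) with ⟨he, _⟩ | ⟨he, _⟩ <;> rw [he] <;>
        simp only [hg'] <;>
        nlinarith [sq_nonneg (t * v x - v' x), sq_nonneg (t * v x + v' x),
          ht0, h1, sq_nonneg (v x), sq_nonneg (v' x)]
    have hrint : IntervalIntegrable
        (fun x => ((q : ℝ) / (b - a)) * v x ^ 2 + ((b - a) / (q : ℝ)) * v' x ^ 2)
        volume a b := (hv2int.const_mul _).add (hv'2int.const_mul _)
    have := intervalIntegral.integral_mono_on hab.le habsint hrint hpt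
    rw [intervalIntegral.integral_add (hv2int.const_mul _) (hv'2int.const_mul _),
      intervalIntegral.integral_const_mul, intervalIntegral.integral_const_mul] at this
    exact this
  have step1' : v c ^ 2 ≤ (1 / (b - a)) * (∫ s in a..b, v s ^ 2) + I2 := by
    have h2 : (b - a) * ((1 / (b - a)) * (∫ s in a..b, v s ^ 2)) =
        (∫ s in a..b, v s ^ 2) := by field_simp
    nlinarith [step1, h2, hba]
  have hcomb : (((q : ℝ) + 1) / (b - a)) * (∫ s in a..b, v s ^ 2) =
      (1 / (b - a)) * (∫ s in a..b, v s ^ 2) +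
      ((q : ℝ) / (b - a)) * (∫ s in a..b, v s ^ 2) := by ring
  rw [hcomb]
  linarith [step1', step2]

/-- The `q`-dependent endpoint trace inequality of Section 3.2, obtained from
the one-dimensional multiplicative trace inequality and Young's inequality:
for `v` continuously differentiable on `[a, b]` (with derivative `v'`) and a
natural number `q ≥ 1`,
`v(a)² ≤ ((q+1)/(b−a)) ∫_a^b v² + ((b−a)/q) ∫_a^b v'²`,
and the same bound holds for `v(b)²`. -/
theorem stmt10 (a b : ℝ) (hab : a < b) (q : ℕ) (hq : 1 ≤ q) (v v' : ℝ → ℝ)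
    (hderiv : ∀ s ∈ Set.Icc a b, HasDerivAt v (v' s) s)
    (hcont : ContinuousOn v' (Set.Icc a b)) :
    (v a) ^ 2 ≤ (((q : ℝ) + 1) / (b - a)) * (∫ s in a..b, (v s) ^ 2) +
        ((b - a) / (q : ℝ)) * (∫ s in a..b, (v' s) ^ 2) ∧
      (v b) ^ 2 ≤ (((q : ℝ) + 1) / (b - a)) * (∫ s in a..b, (v s) ^ 2) +
        ((b - a) / (q : ℝ)) * (∫ s in a..b, (v' s) ^ 2) := by
  exact ⟨aux10 a b hab q hq v v' hderiv hcont a ⟨le_refl a, hab.le⟩,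
    aux10 a b hab q hq v v' hderiv hcont b ⟨hab.le, le_refl b⟩⟩
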